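/- The sequence of Huisken energies of round shrinker spheres, a_k = √(4π) · (k/(2e))^{k/2} / Γ((k+1)/2), is strictly decreasing in k ≥ 1 and converges to √2 as k → ∞. -/

import Mathlib

open Real Filter Stirling Topology
open scoped Nat

noncomputable def huiskenSphereEnergy (k : ℕ) : ℝ :=
  Real.sqrt (4 * π) * ((k : ℝ) / (2 * Real.exp 1)) ^ ((k : ℝ) / 2) /
    Real.Gamma (((k : ℝ) + 1) / 2)

noncomputable def wls (m : ℕ) : ℝ := ((2 * m)! : ℝ) / (4 ^ m * ((m)! : ℝ) ^ 2)

lemma wls_pos (m : ℕ) : 0 < wls m := by unfold wls; positivity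

lemma fact_cast_succ (m : ℕ) : (((m + 1))! : ℝ) = (m + 1) * (m)! := by
  rw [Nat.factorial_succ]; push_cast; ring

lemma fact_cast_two_succ (m : ℕ) : ((2 * (m + 1))! : ℝ) = (2 * m + 2) * (2 * m + 1) * (2 * m)! := by
  have h1 : 2 * (m + 1) = (2 * m + 1) + 1 := by ring
  rw [h1, Nat.factorial_succ, Nat.factorial_succ]; push_cast; ring

lemma wls_succ (m : ℕ) : wls (m + 1) = wls m * ((2 * m + 1) / (2 * m + 2)) := by
  unfold wls
  rw [fact_cast_two_succ, fact_cast_succ]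
  have h1 : ((m)! : ℝ) ≠ 0 := by positivity
  have h2 : (2 * (m : ℝ) + 2) ≠ 0 := by positivity
  have h3 : (m : ℝ) + 1 ≠ 0 := by positivity
  field_simp
  ring

lemma Gamma_half (m : ℕ) :
    Real.Gamma ((m : ℝ) + 1 / 2) = ((2 * m)! : ℝ) * Real.sqrt π / (4 ^ m * (m)!) := by
  induction m with
  | zero => norm_num [Real.Gamma_one_half_eq]
  | succ n ih =>
    have h0 : ((n : ℝ) + 1 / 2) ≠ 0 := by positivity
    have h1 : ((n + 1 : ℕ) : ℝ) + 1 / 2 = ((n : ℝ) + 1 / 2) + 1 := by push_cast; ring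
    rw [h1, Real.Gamma_add_one h0, ih, fact_cast_two_succ, fact_cast_succ]
    have h2 : ((n)! : ℝ) ≠ 0 := by positivity
    have h3 : (n : ℝ) + 1 ≠ 0 := by positivity
    field_simp
    ring

lemma sqrt_four_pi : Real.sqrt (4 * π) = 2 * Real.sqrt π := by
  rw [show (4:ℝ) * π = 2 ^ 2 * π by ring, Real.sqrt_mul (by positivity), Real.sqrt_sq (by norm_num)]

lemma energy_nonneg (k : ℕ) : 0 ≤ huiskenSphereEnergy k := by
  unfold huiskenSphereEnergy
  have h1 : 0 < Real.Gamma (((k : ℝ) + 1) / 2) := Real.Gamma_pos_of_pos (by positivity)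
  have h2 : 0 ≤ ((k : ℝ) / (2 * Real.exp 1)) ^ ((k : ℝ) / 2) := Real.rpow_nonneg (by positivity) _
  positivity

lemma energy_even (m : ℕ) :
    huiskenSphereEnergy (2 * m) =
      2 * 4 ^ m * ((m)! : ℝ) * ((m : ℝ) / Real.exp 1) ^ m / ((2 * m)! : ℝ) := by
  unfold huiskenSphereEnergy
  have h1 : ((2 * m : ℕ) : ℝ) / 2 = (m : ℕ) := by push_cast; ring
  have h2 : ((2 * m : ℕ) : ℝ) / (2 * Real.exp 1) = (m : ℝ) / Real.exp 1 := by
    have he : (0:ℝ) < Real.exp 1 := Real.exp_pos 1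
    push_cast; field_simp
  have h3 : (((2 * m : ℕ) : ℝ) + 1) / 2 = (m : ℝ) + 1 / 2 := by push_cast; ring
  rw [h2, h1, Real.rpow_natCast, h3, Gamma_half, sqrt_four_pi]
  have hf : ((2 * m)! : ℝ) ≠ 0 := by positivity
  have hg : ((m)! : ℝ) ≠ 0 := by positivity
  have hsπ : Real.sqrt π ≠ 0 := by positivity
  field_simp

lemma energy_even_sq (m : ℕ) :
    (huiskenSphereEnergy (2 * m)) ^ 2 =
      4 * 16 ^ m * ((m)! : ℝ) ^ 2 * (((m : ℝ) / Real.exp 1) ^ m) ^ 2 / ((2 * m)! : ℝ) ^ 2 := by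
  rw [energy_even, div_pow, mul_pow, mul_pow, mul_pow]
  norm_num
  ring_nf
  rw [show (4:ℝ) ^ (m * 2) = 16 ^ m by rw [pow_mul']; norm_num]

lemma energy_odd_sq (m : ℕ) :
    (huiskenSphereEnergy (2 * m + 1)) ^ 2 =
      4 * π * (((2 * m + 1 : ℕ) : ℝ) / (2 * Real.exp 1)) ^ (2 * m + 1) / ((m)! : ℝ) ^ 2 := by
  unfold huiskenSphereEnergy
  have hx : (0:ℝ) ≤ ((2 * m + 1 : ℕ) : ℝ) / (2 * Real.exp 1) := by positivity
  have h3 : (((2 * m + 1 : ℕ) : ℝ) + 1) / 2 = ((m : ℕ) : ℝ) + 1 := by push_cast; ring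
  rw [h3, Real.Gamma_nat_eq_factorial]
  rw [div_pow, mul_pow]
  have hpow : ((((2 * m + 1 : ℕ) : ℝ) / (2 * Real.exp 1)) ^ (((2 * m + 1 : ℕ) : ℝ) / 2)) ^ 2
      = (((2 * m + 1 : ℕ) : ℝ) / (2 * Real.exp 1)) ^ (2 * m + 1 : ℕ) := by
    rw [← Real.rpow_natCast ((((2 * m + 1 : ℕ) : ℝ) / (2 * Real.exp 1)) ^ (((2 * m + 1 : ℕ) : ℝ) / 2)) 2,
      ← Real.rpow_natCast _ (2 * m + 1), ← Real.rpow_mul hx]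
    norm_num
  rw [hpow, Real.sq_sqrt (by positivity : (0:ℝ) ≤ 4 * π)]

lemma log_le_quintic {x : ℝ} (hx : 0 ≤ x) :
    Real.log (1 + x) ≤ x - x^2/2 + x^3/3 - x^4/4 + x^5/5 := by
  set f : ℝ → ℝ := fun y => y - y^2/2 + y^3/3 - y^4/4 + y^5/5 - Real.log (1 + y) with hfdef
  have hf : ∀ y : ℝ, 0 ≤ y → HasDerivAt f (y^5/(1+y)) y := by
    intro y hy
    have h1 : HasDerivAt (fun t : ℝ => 1 + t) 1 y := by
      simpa using (hasDerivAt_id y).const_add 1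
    have hy1 : (1:ℝ) + y ≠ 0 := by positivity
    have hlog : HasDerivAt (fun t : ℝ => Real.log (1 + t)) (1/(1+y)) y := by
      simpa [Function.comp_def] using (Real.hasDerivAt_log hy1).comp y h1
    have hpoly : HasDerivAt (fun t : ℝ => t - t^2/2 + t^3/3 - t^4/4 + t^5/5)
        (1 - y + y^2 - y^3 + y^4) y := by
      have := ((((hasDerivAt_id y).sub ((hasDerivAt_pow 2 y).div_const 2)).add
        ((hasDerivAt_pow 3 y).div_const 3)).sub ((hasDerivAt_pow 4 y).div_const 4)).add
        ((hasDerivAt_pow 5 y).div_const 5)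
      refine this.congr_deriv ?_
      push_cast; ring
    have := hpoly.sub hlog
    refine this.congr_deriv ?_
    field_simp
    ring
  have mono : MonotoneOn f (Set.Ici (0:ℝ)) := by
    apply monotoneOn_of_deriv_nonneg (convex_Ici 0)
    · exact fun y hy => ((hf y hy).continuousAt).continuousWithinAt
    · intro y hy
      rw [interior_Ici] at hy
      exact (hf y (le_of_lt hy)).differentiableAt.differentiableWithinAt
    · intro y hy
      rw [interior_Ici] at hy
      have hy' : 0 < y := hy
      rw [(hf y hy'.le).deriv]
      positivity
  have h0 : f 0 = 0 := by simp [hfdef]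
  have := mono (Set.self_mem_Ici) (Set.mem_Ici.2 hx) hx
  rw [h0] at this
  simp only [hfdef] at this
  linarith

lemma quad_le_log {x : ℝ} (hx : 0 ≤ x) :
    x - x^2/2 ≤ Real.log (1 + x) := by
  set f : ℝ → ℝ := fun y => Real.log (1 + y) - y + y^2/2 with hfdef
  have hf : ∀ y : ℝ, 0 ≤ y → HasDerivAt f (y^2/(1+y)) y := by
    intro y hy
    have h1 : HasDerivAt (fun t : ℝ => 1 + t) 1 y := by
      simpa using (hasDerivAt_id y).const_add 1
    have hy1 : (1:ℝ) + y ≠ 0 := by positivity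
    have hlog : HasDerivAt (fun t : ℝ => Real.log (1 + t)) (1/(1+y)) y := by
      simpa [Function.comp_def] using (Real.hasDerivAt_log hy1).comp y h1
    have hpoly : HasDerivAt (fun t : ℝ => t - t^2/2) (1 - y) y := by
      have := (hasDerivAt_id y).sub ((hasDerivAt_pow 2 y).div_const 2)
      refine this.congr_deriv ?_
      push_cast; ring
    have := hlog.sub hpoly
    have h2 : ((fun t => Real.log (1+t)) - (fun t => t - t^2/2)) = f := by
      funext t; simp [hfdef]; ring
    rw [h2] at this
    refine this.congr_deriv ?_
    field_simp
    ring
  have mono : MonotoneOn f (Set.Ici (0:ℝ)) := by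
    apply monotoneOn_of_deriv_nonneg (convex_Ici 0)
    · exact fun y hy => ((hf y hy).continuousAt).continuousWithinAt
    · intro y hy
      rw [interior_Ici] at hy
      exact (hf y (le_of_lt hy)).differentiableAt.differentiableWithinAt
    · intro y hy
      rw [interior_Ici] at hy
      have hy' : 0 < y := hy
      rw [(hf y hy'.le).deriv]
      positivity
  have h0 : f 0 = 0 := by simp [hfdef]
  have := mono (Set.self_mem_Ici) (Set.mem_Ici.2 hx) hx
  rw [h0] at this
  simp only [hfdef] at this
  linarith

lemma log_le_cubic {x : ℝ} (hx : 0 ≤ x) (hx2 : x ≤ 1) :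
    Real.log (1 + x) ≤ x - x^2/2 + x^3/3 := by
  have := log_le_quintic hx
  nlinarith [pow_nonneg hx 4, pow_nonneg hx 5, pow_le_pow_left₀ hx hx2 1]

lemma pow_two_m (m : ℕ) :
    ((2 * (m:ℝ)) / Real.exp 1) ^ (2 * m) = 4 ^ m * (((m:ℝ) / Real.exp 1) ^ m) ^ 2 := by
  rw [show (2 * (m:ℝ)) / Real.exp 1 = 2 * ((m:ℝ) / Real.exp 1) by ring, mul_pow,
    show (2:ℝ) ^ (2 * m) = 4 ^ m by rw [pow_mul]; norm_num, ← pow_mul, mul_comm m 2]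

lemma stirling_sq_identity {m : ℕ} (hm : 1 ≤ m) :
    stirlingSeq (2 * m) ^ 2 = stirlingSeq m ^ 4 * m * wls m ^ 2 := by
  unfold stirlingSeq wls
  have hm' : (0:ℝ) < m := by exact_mod_cast hm
  have hc : ((2 * m : ℕ) : ℝ) = 2 * (m:ℝ) := by push_cast; ring
  rw [hc, pow_two_m]
  simp only [div_pow, mul_pow]
  rw [Real.sq_sqrt (by positivity : (0:ℝ) ≤ 2 * (2 * (m:ℝ)))]
  rw [show Real.sqrt (2 * (m:ℝ)) ^ 4 = (2 * (m:ℝ)) ^ 2 by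
    rw [show 4 = 2 * 2 from rfl, pow_mul, Real.sq_sqrt (by positivity : (0:ℝ) ≤ 2 * (m:ℝ))]]
  have h1 : ((m)! : ℝ) ≠ 0 := by positivity
  have h2 : (((2*m))! : ℝ) ≠ 0 := by positivity
  have h3 : Real.exp 1 ≠ 0 := Real.exp_ne_zero 1
  field_simp

lemma stirlingSeq_pos {m : ℕ} (hm : 1 ≤ m) : 0 < stirlingSeq m := by
  obtain ⟨n, rfl⟩ := Nat.exists_eq_add_of_le hm
  simpa [Nat.add_comm] using stirlingSeq'_pos n

lemma tendsto_s2m : Tendsto (fun m => stirlingSeq (2 * m)) atTop (𝓝 (Real.sqrt π)) :=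
  tendsto_stirlingSeq_sqrt_pi.comp
    (tendsto_atTop_mono (fun n : ℕ => (by omega : n ≤ 2 * n)) tendsto_id)

lemma tendsto_V : Tendsto (fun m : ℕ => π * m * wls m ^ 2) atTop (𝓝 1) := by
  have key : ∀ᶠ m : ℕ in atTop, π * (stirlingSeq (2*m) ^ 2 / stirlingSeq m ^ 4) = π * m * wls m ^ 2 := by
    filter_upwards [eventually_ge_atTop 1] with m hm
    rw [stirling_sq_identity hm]
    have hs : stirlingSeq m ≠ 0 := ne_of_gt (stirlingSeq_pos hm)
    field_simp
  apply Tendsto.congr' key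
  have h1 : Tendsto (fun m : ℕ => stirlingSeq (2*m) ^ 2) atTop (𝓝 (Real.sqrt π ^ 2)) :=
    tendsto_s2m.pow 2
  have h2 : Tendsto (fun m : ℕ => stirlingSeq m ^ 4) atTop (𝓝 (Real.sqrt π ^ 4)) :=
    tendsto_stirlingSeq_sqrt_pi.pow 4
  have h4 : Real.sqrt π ^ 4 ≠ 0 := by positivity
  have := (h1.div h2 h4).const_mul π
  convert this using 2
  · rfl
  rw [show Real.sqrt π ^ 4 = (Real.sqrt π ^ 2) ^ 2 by ring, Real.sq_sqrt pi_pos.le]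
  field_simp

lemma energy_even_sq_stirling {m : ℕ} (hm : 1 ≤ m) :
    (huiskenSphereEnergy (2 * m)) ^ 2 = 2 * stirlingSeq m ^ 2 / stirlingSeq (2 * m) ^ 2 := by
  rw [energy_even_sq, stirling_sq_identity hm]
  unfold stirlingSeq wls
  have hm' : (0:ℝ) < m := by exact_mod_cast hm
  simp only [div_pow, mul_pow]
  rw [Real.sq_sqrt (by positivity : (0:ℝ) ≤ 2 * (m:ℝ))]
  rw [show Real.sqrt (2 * (m:ℝ)) ^ 4 = (2 * (m:ℝ)) ^ 2 by
    rw [show 4 = 2 * 2 from rfl, pow_mul, Real.sq_sqrt (by positivity : (0:ℝ) ≤ 2 * (m:ℝ))]]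
  have h1 : ((m)! : ℝ) ≠ 0 := by positivity
  have h2 : (((2*m))! : ℝ) ≠ 0 := by positivity
  have h3 : Real.exp 1 ≠ 0 := Real.exp_ne_zero 1
  have h5 : ((m:ℝ)/Real.exp 1) ^ m ≠ 0 := by positivity
  field_simp
  ring_nf
  rw [show ((4:ℝ))^(m*2) = 16^m by rw [pow_mul']; norm_num]

lemma tendsto_energy_even : Tendsto (fun m : ℕ => huiskenSphereEnergy (2 * m)) atTop (𝓝 (Real.sqrt 2)) := by
  have hsq : Tendsto (fun m : ℕ => (huiskenSphereEnergy (2 * m)) ^ 2) atTop (𝓝 2) := by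
    have key : ∀ᶠ m : ℕ in atTop, 2 * stirlingSeq m ^ 2 / stirlingSeq (2 * m) ^ 2
        = (huiskenSphereEnergy (2 * m)) ^ 2 := by
      filter_upwards [eventually_ge_atTop 1] with m hm
      exact (energy_even_sq_stirling hm).symm
    apply Tendsto.congr' key
    have h1 : Tendsto (fun m : ℕ => 2 * stirlingSeq m ^ 2) atTop (𝓝 (2 * Real.sqrt π ^ 2)) :=
      (tendsto_stirlingSeq_sqrt_pi.pow 2).const_mul 2
    have h2 : Real.sqrt π ^ 2 ≠ 0 := by positivity
    have := h1.div (tendsto_s2m.pow 2) h2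
    convert this using 2
    · rfl
    field_simp
  have := hsq.sqrt
  rw [show Real.sqrt 2 = Real.sqrt 2 from rfl] at this
  apply this.congr
  intro m
  exact Real.sqrt_sq (energy_nonneg _)

noncomputable def GG (n : ℕ) : ℝ := π * n * wls n ^ 2 * Real.exp (1/(4*(n:ℝ)))
noncomputable def GG2 (n : ℕ) : ℝ :=
  π * n * wls n ^ 2 * Real.exp (1/(4*(n:ℝ)) - 1/(96*(n:ℝ)^3))

lemma GG_step {m : ℕ} (hm : 1 ≤ m) : GG (m+1) < GG m := by
  unfold GG
  have hM : (1:ℝ) ≤ (m:ℝ) := by exact_mod_cast hm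
  have hM0 : (0:ℝ) < (m:ℝ) := by linarith
  set M := (m:ℝ) with hMdef
  have hw := wls_pos m
  have hx : (0:ℝ) < 1/(4*M*(M+1)) := by positivity
  have hlt : 1 + 1/(4*M*(M+1)) < Real.exp (1/(4*M*(M+1))) := by
    have := Real.add_one_lt_exp (ne_of_gt hx)
    linarith
  have cast1 : ((m+1:ℕ):ℝ) = M + 1 := by push_cast; ring
  rw [wls_succ, cast1]
  have e1 : π * (M+1) * (wls m * ((2*M+1)/(2*M+2))) ^ 2 * Real.exp (1/(4*(M+1)))
      = (π * wls m ^ 2 * Real.exp (1/(4*(M+1)))) * (M * (1 + 1/(4*M*(M+1)))) := by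
    field_simp
    ring
  have e2 : π * M * wls m ^ 2 * Real.exp (1/(4*M))
      = (π * wls m ^ 2 * Real.exp (1/(4*(M+1)))) * (M * Real.exp (1/(4*M*(M+1)))) := by
    rw [show (1:ℝ)/(4*M) = 1/(4*(M+1)) + 1/(4*M*(M+1)) by field_simp, Real.exp_add]
    ring
  have cast2 : 2 * M + 1 = 2 * (m:ℝ) + 1 := rfl
  rw [e1, e2]
  apply mul_lt_mul_of_pos_left _ (by positivity)
  exact mul_lt_mul_of_pos_left hlt hM0

lemma GG2_step {m : ℕ} (hm : 1 ≤ m) : GG2 m < GG2 (m+1) := by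
  unfold GG2
  have hM : (1:ℝ) ≤ (m:ℝ) := by exact_mod_cast hm
  have hM0 : (0:ℝ) < (m:ℝ) := by linarith
  set M := (m:ℝ) with hMdef
  have hw := wls_pos m
  set x : ℝ := 1/(4*M*(M+1)) with hxdef
  have hx : (0:ℝ) < x := by positivity
  have hd : 1/(4*M) - 1/(96*M^3) - (1/(4*(M+1)) - 1/(96*(M+1)^3)) < Real.log (1+x) := by
    have iden : x - x^2/2 - (1/(4*M) - 1/(96*M^3) - (1/(4*(M+1)) - 1/(96*(M+1)^3)))
        = 1/(96*M^3*(M+1)^3) := by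
      rw [hxdef]
      have hM1 : (0:ℝ) < M + 1 := by linarith
      field_simp
      ring
    have hp : (0:ℝ) < 1/(96*M^3*(M+1)^3) := by positivity
    have h1 : 1/(4*M) - 1/(96*M^3) - (1/(4*(M+1)) - 1/(96*(M+1)^3)) < x - x^2/2 := by linarith
    exact lt_of_lt_of_le h1 (quad_le_log hx.le)
  have hed : Real.exp (1/(4*M) - 1/(96*M^3) - (1/(4*(M+1)) - 1/(96*(M+1)^3))) < 1 + x := by
    calc Real.exp _ < Real.exp (Real.log (1+x)) := Real.exp_lt_exp.mpr hd
    _ = 1 + x := Real.exp_log (by linarith)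
  have cast1 : ((m+1:ℕ):ℝ) = M + 1 := by push_cast; ring
  rw [wls_succ, cast1]
  have key : (M+1) * (wls m * ((2*M+1)/(2*M+2))) ^ 2 = M * wls m ^ 2 * (1+x) := by
    rw [hxdef]
    field_simp
    ring
  have e2 : π * M * wls m ^ 2 * Real.exp (1/(4*M) - 1/(96*M^3))
      = (π * M * wls m ^ 2 * Real.exp (1/(4*(M+1)) - 1/(96*(M+1)^3))) *
        Real.exp (1/(4*M) - 1/(96*M^3) - (1/(4*(M+1)) - 1/(96*(M+1)^3))) := by
    rw [show (1:ℝ)/(4*M) - 1/(96*M^3) = (1/(4*(M+1)) - 1/(96*(M+1)^3)) +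
        (1/(4*M) - 1/(96*M^3) - (1/(4*(M+1)) - 1/(96*(M+1)^3))) by ring, Real.exp_add]
    ring
  rw [e2, show π * (M+1) * (wls m * ((2*M+1)/(2*M+2))) ^ 2 *
      Real.exp (1/(4*(M+1)) - 1/(96*(M+1)^3))
      = (π * M * wls m ^ 2 * Real.exp (1/(4*(M+1)) - 1/(96*(M+1)^3))) * (1+x) by
    linear_combination (Real.exp (1/(4*(M+1)) - 1/(96*(M+1)^3)) * π) * key]
  exact mul_lt_mul_of_pos_left hed (by positivity)

lemma tendsto_inv_m : Tendsto (fun m : ℕ => 1/(4*(m:ℝ))) atTop (𝓝 0) := by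
  have h : Tendsto (fun m : ℕ => (4*(m:ℝ))) atTop atTop :=
    (tendsto_natCast_atTop_atTop (R := ℝ)).const_mul_atTop (by norm_num)
  exact h.inv_tendsto_atTop.congr (fun n => by rw [Pi.inv_apply, one_div])

lemma tendsto_inv_m3 : Tendsto (fun m : ℕ => 1/(96*(m:ℝ)^3)) atTop (𝓝 0) := by
  have h : Tendsto (fun m : ℕ => (96*(m:ℝ)^3)) atTop atTop := by
    have h3 : Tendsto (fun m : ℕ => ((m:ℝ))^3) atTop atTop :=
      (tendsto_pow_atTop (by norm_num)).comp (tendsto_natCast_atTop_atTop (R := ℝ))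
    exact h3.const_mul_atTop (by norm_num)
  exact h.inv_tendsto_atTop.congr (fun n => by rw [Pi.inv_apply, one_div])

lemma tendsto_GG : Tendsto GG atTop (𝓝 1) := by
  have h2 : Tendsto (fun m : ℕ => Real.exp (1/(4*(m:ℝ)))) atTop (𝓝 1) := by
    have := (Real.continuous_exp.tendsto 0).comp tendsto_inv_m
    simpa [Function.comp_def] using this
  have h := tendsto_V.mul h2
  rw [one_mul] at h
  exact h

lemma tendsto_GG2 : Tendsto GG2 atTop (𝓝 1) := by
  have harg : Tendsto (fun m : ℕ => 1/(4*(m:ℝ)) - 1/(96*(m:ℝ)^3)) atTop (𝓝 0) := by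
    simpa using tendsto_inv_m.sub tendsto_inv_m3
  have h2 : Tendsto (fun m : ℕ => Real.exp (1/(4*(m:ℝ)) - 1/(96*(m:ℝ)^3))) atTop (𝓝 1) := by
    have := (Real.continuous_exp.tendsto 0).comp harg
    simpa [Function.comp_def] using this
  have h := tendsto_V.mul h2
  rw [one_mul] at h
  exact h

lemma GG_ge_one {m : ℕ} (hm : 1 ≤ m) : 1 ≤ GG m := by
  apply le_of_tendsto tendsto_GG
  filter_upwards [eventually_ge_atTop m] with n hn
  induction n, hn using Nat.le_induction with
  | base => exact le_refl _
  | succ n hn ih => exact le_trans (GG_step (le_trans hm hn)).le ih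

lemma GG2_le_one {m : ℕ} (hm : 1 ≤ m) : GG2 m ≤ 1 := by
  apply ge_of_tendsto tendsto_GG2
  filter_upwards [eventually_ge_atTop m] with n hn
  induction n, hn using Nat.le_induction with
  | base => exact le_refl _
  | succ n hn ih => exact le_trans ih (GG2_step (le_trans hm hn)).le

lemma VW1 {m : ℕ} (hm : 1 ≤ m) : Real.exp (-(1/(4*(m:ℝ)))) < π * m * wls m ^ 2 := by
  have h1 : 1 < GG m := lt_of_le_of_lt (GG_ge_one (by omega : 1 ≤ m + 1)) (GG_step hm)
  unfold GG at h1
  have he : (0:ℝ) < Real.exp (1/(4*(m:ℝ))) := Real.exp_pos _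
  rw [Real.exp_neg]
  rw [inv_lt_iff_one_lt_mul₀ he]
  linarith [mul_comm (π * (m:ℝ) * wls m ^ 2) (Real.exp (1/(4*(m:ℝ))))]

lemma VW2 {m : ℕ} (hm : 1 ≤ m) :
    π * m * wls m ^ 2 < Real.exp (1/(96*(m:ℝ)^3) - 1/(4*(m:ℝ))) := by
  have h1 : GG2 m < 1 := lt_of_lt_of_le (GG2_step hm) (GG2_le_one (by omega : 1 ≤ m + 1))
  unfold GG2 at h1
  have he : (0:ℝ) < Real.exp (1/(4*(m:ℝ)) - 1/(96*(m:ℝ)^3)) := Real.exp_pos _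
  have h2 : π * m * wls m ^ 2 < 1 / Real.exp (1/(4*(m:ℝ)) - 1/(96*(m:ℝ)^3)) :=
    (lt_div_iff₀ he).mpr (by linarith)
  rw [one_div, ← Real.exp_neg,
    show -(1/(4*(m:ℝ)) - 1/(96*(m:ℝ)^3)) = 1/(96*(m:ℝ)^3) - 1/(4*(m:ℝ)) by ring] at h2
  exact h2

lemma fact_cast_two (m : ℕ) : ((2 * m)! : ℝ) = wls m * 4 ^ m * ((m)! : ℝ) ^ 2 := by
  unfold wls
  have h : (4:ℝ) ^ m * ((m)! : ℝ) ^ 2 ≠ 0 := by positivity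
  field_simp

lemma ineq_B {m : ℕ} (hm : 1 ≤ m) :
    huiskenSphereEnergy (2 * m + 1) < huiskenSphereEnergy (2 * m) := by
  have hM : (1:ℝ) ≤ (m:ℝ) := by exact_mod_cast hm
  have hM0 : (0:ℝ) < (m:ℝ) := by linarith
  set M := (m:ℝ) with hMdef
  have hw := wls_pos m
  have he : (0:ℝ) < Real.exp 1 := Real.exp_pos 1
  -- key exponential bound
  have hx : (0:ℝ) ≤ 1/(2*M) := by positivity
  have hkey : (2*M+1) * (1/(2*M) - (1/(2*M))^2/2 + (1/(2*M))^3/3 - (1/(2*M))^4/4 + (1/(2*M))^5/5)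
      ≤ 1 + 1/(4*M) - 1/(96*M^3) := by
    have iden : 1 + 1/(4*M) - 1/(96*M^3)
        - (2*M+1) * (1/(2*M) - (1/(2*M))^2/2 + (1/(2*M))^3/3 - (1/(2*M))^4/4 + (1/(2*M))^5/5)
        = (40*M^3 - 20*M^2 + 3*M - 6)/(960*M^5) := by
      field_simp
      ring
    have hnum : (0:ℝ) ≤ 40*M^3 - 20*M^2 + 3*M - 6 := by nlinarith
    have : (0:ℝ) ≤ (40*M^3 - 20*M^2 + 3*M - 6)/(960*M^5) := by positivity
    linarith
  have hb : (0:ℝ) < 1 + 1/(2*M) := by positivity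
  have hpow : (1 + 1/(2*M)) ^ (2*m+1) ≤ Real.exp (1 + 1/(4*M) - 1/(96*M^3)) := by
    rw [← Real.exp_log (pow_pos hb (2*m+1)), Real.log_pow]
    apply Real.exp_le_exp.mpr
    have hlog := log_le_quintic hx
    have hcast : ((2*m+1 : ℕ) : ℝ) = 2*M+1 := by push_cast; ring
    calc ((2*m+1 : ℕ) : ℝ) * Real.log (1 + 1/(2*M))
        ≤ (2*M+1) * (1/(2*M) - (1/(2*M))^2/2 + (1/(2*M))^3/3 - (1/(2*M))^4/4 + (1/(2*M))^5/5) := by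
          rw [hcast]
          exact mul_le_mul_of_nonneg_left hlog (by linarith)
      _ ≤ 1 + 1/(4*M) - 1/(96*M^3) := hkey
  have final : π * M * wls m ^ 2 * (1 + 1/(2*M)) ^ (2*m+1) < Real.exp 1 := by
    have h1 := VW2 hm
    have h2 : π * M * wls m ^ 2 * (1 + 1/(2*M)) ^ (2*m+1)
        < Real.exp (1/(96*M^3) - 1/(4*M)) * Real.exp (1 + 1/(4*M) - 1/(96*M^3)) :=
      mul_lt_mul h1 hpow (by positivity) (Real.exp_pos _).le
    rw [← Real.exp_add] at h2
    calc π * M * wls m ^ 2 * (1 + 1/(2*M)) ^ (2*m+1)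
        < Real.exp (1/(96*M^3) - 1/(4*M) + (1 + 1/(4*M) - 1/(96*M^3))) := h2
      _ = Real.exp 1 := by congr 1; ring
  -- bridge to energies
  apply lt_of_pow_lt_pow_left₀ 2 (energy_nonneg (2*m))
  rw [energy_odd_sq, energy_even_sq]
  have hf1 : (0:ℝ) < ((m)! : ℝ) ^ 2 := by positivity
  have hf2 : (0:ℝ) < ((2*m)! : ℝ) ^ 2 := by positivity
  rw [div_lt_div_iff₀ hf1 hf2]
  set A : ℝ := (M/Real.exp 1) ^ m with hAdef
  have hA : (0:ℝ) < A := by rw [hAdef]; positivity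
  set D : ℝ := (1 + 1/(2*M)) ^ (2*m+1) with hDdef
  have hD : (0:ℝ) < D := by rw [hDdef]; positivity
  have hC : ((2*m+1 : ℕ) : ℝ)/(2*Real.exp 1) = (1 + 1/(2*M)) * (M/Real.exp 1) := by
    push_cast
    field_simp
    ring
  have hCpow : (((2*m+1 : ℕ) : ℝ)/(2*Real.exp 1)) ^ (2*m+1) = D * (M/Real.exp 1) ^ (2*m+1) := by
    rw [hC, mul_pow, hDdef]
  have hMe : (M/Real.exp 1) ^ (2*m+1) = A^2 * (M/Real.exp 1) := by
    rw [pow_succ, hAdef, ← pow_mul, mul_comm m 2]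
  have h16 : (16:ℝ)^m = (4^m)^2 := by
    rw [show (16:ℝ) = 4^2 by norm_num, ← pow_mul, mul_comm 2 m, pow_mul]
  rw [hCpow, hMe, fact_cast_two m, h16]
  set K : ℝ := 4*A^2*(4^m)^2*((m)! : ℝ)^4/Real.exp 1 with hKdef
  have hK : (0:ℝ) < K := by
    rw [hKdef]
    have : (0:ℝ) < ((m)! : ℝ) := by positivity
    positivity
  have step : (π*M*wls m^2*D) * K < Real.exp 1 * K := by
    exact mul_lt_mul_of_pos_right final hK
  have eqL : 4*π*(D*(A^2*(M/Real.exp 1))) * (wls m*4^m*((m)! : ℝ)^2)^2 = (π*M*wls m^2*D) * K := by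
    rw [hKdef]
    field_simp
  have eqR : 4*(4^m)^2*((m)! : ℝ)^2*A^2*((m)! : ℝ)^2 = Real.exp 1 * K := by
    rw [hKdef]
    field_simp
  linarith [step, eqL, eqR]

lemma fact_cast_succ' (m : ℕ) : (((m + 1))! : ℝ) = ((m:ℝ) + 1) * (m)! := by
  rw [Nat.factorial_succ]; push_cast; ring

lemma ineq_A {m : ℕ} (hm : 1 ≤ m) :
    huiskenSphereEnergy (2 * (m + 1)) < huiskenSphereEnergy (2 * m + 1) := by
  have hM : (1:ℝ) ≤ (m:ℝ) := by exact_mod_cast hm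
  have hM0 : (0:ℝ) < (m:ℝ) := by linarith
  set M := (m:ℝ) with hMdef
  have hw := wls_pos (m+1)
  have he : (0:ℝ) < Real.exp 1 := Real.exp_pos 1
  set u : ℝ := 1/(2*M+1) with hudef
  have hu0 : (0:ℝ) < u := by rw [hudef]; positivity
  have hu1 : u ≤ 1 := by
    rw [hudef]
    rw [div_le_one (by positivity)]
    linarith
  have hkey : (2*M+1) * (u - u^2/2 + u^3/3) ≤ 1 - 1/(4*(M+1)) := by
    have iden : 1 - 1/(4*(M+1)) - (2*M+1) * (u - u^2/2 + u^3/3)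
        = (2*M-1)/(6*(2*M+1)^2*(2*M+2)) := by
      rw [hudef]
      field_simp
      ring
    have : (0:ℝ) ≤ (2*M-1)/(6*(2*M+1)^2*(2*M+2)) := by
      apply div_nonneg (by linarith)
      positivity
    linarith
  have hb : (0:ℝ) < 1 + u := by linarith
  have hpow : (1 + u) ^ (2*m+1) ≤ Real.exp (1 - 1/(4*(M+1))) := by
    rw [← Real.exp_log (pow_pos hb (2*m+1)), Real.log_pow]
    apply Real.exp_le_exp.mpr
    have hlog := log_le_cubic hu0.le hu1
    have hcast : ((2*m+1 : ℕ) : ℝ) = 2*M+1 := by push_cast; ring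
    calc ((2*m+1 : ℕ) : ℝ) * Real.log (1 + u)
        ≤ (2*M+1) * (u - u^2/2 + u^3/3) := by
          rw [hcast]
          exact mul_le_mul_of_nonneg_left hlog (by linarith)
      _ ≤ 1 - 1/(4*(M+1)) := hkey
  have hVW := VW1 (show 1 ≤ m + 1 by omega)
  have hcast1 : ((m+1 : ℕ) : ℝ) = M + 1 := by push_cast; ring
  rw [hcast1] at hVW
  have final : (1 + u) ^ (2*m+1) < π * (M+1) * wls (m+1) ^ 2 * Real.exp 1 := by
    calc (1 + u) ^ (2*m+1) ≤ Real.exp (1 - 1/(4*(M+1))) := hpow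
      _ = Real.exp (-(1/(4*(M+1)))) * Real.exp 1 := by rw [← Real.exp_add]; congr 1; ring
      _ < (π * (M+1) * wls (m+1) ^ 2) * Real.exp 1 := by
          exact mul_lt_mul_of_pos_right hVW he
  -- bridge
  apply lt_of_pow_lt_pow_left₀ 2 (energy_nonneg (2*m+1))
  rw [energy_odd_sq, energy_even_sq]
  have hf1 : (0:ℝ) < ((m)! : ℝ) ^ 2 := by positivity
  have hf2 : (0:ℝ) < ((2*(m+1))! : ℝ) ^ 2 := by positivity
  rw [div_lt_div_iff₀ hf2 hf1]
  rw [hcast1, fact_cast_two (m+1), fact_cast_succ' m]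
  set C : ℝ := ((2*m+1 : ℕ) : ℝ)/(2*Real.exp 1) with hCdef
  have hC0 : (0:ℝ) < C := by rw [hCdef]; positivity
  set P1 : ℝ := (1 + u) ^ (2*m+1) with hP1def
  set P2 : ℝ := C ^ (2*m+1) with hP2def
  have hP1 : (0:ℝ) < P1 := by rw [hP1def]; positivity
  have hP2 : (0:ℝ) < P2 := by rw [hP2def]; positivity
  have hbase : (1 + u) * C = (M+1)/Real.exp 1 := by
    rw [hCdef, hudef]
    push_cast
    field_simp
    ring
  have hXpow : ((M+1)/Real.exp 1) ^ (2*m+1) = P1 * P2 := by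
    rw [hP1def, hP2def, ← mul_pow, hbase]
  have hA2 : (((M+1)/Real.exp 1) ^ (m+1)) ^ 2 = P1 * P2 * ((M+1)/Real.exp 1) := by
    rw [← pow_mul, show (m+1)*2 = (2*m+1)+1 by ring, pow_succ, hXpow]
  rw [hA2]
  have h16 : (16:ℝ)^(m+1) = (4^(m+1))^2 := by
    rw [show (16:ℝ) = 4^2 by norm_num, ← pow_mul, mul_comm 2 (m+1), pow_mul]
  rw [h16]
  set K : ℝ := 4*(4^(m+1))^2*(((M+1))*((m)! : ℝ))^2*((m)! : ℝ)^2*P2*(M+1)/Real.exp 1 with hKdef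
  have hK : (0:ℝ) < K := by
    rw [hKdef]
    have h1 : (0:ℝ) < ((m)! : ℝ) := by positivity
    have h2 : (0:ℝ) < M + 1 := by linarith
    positivity
  have step : P1 * K < (π * (M+1) * wls (m+1) ^ 2 * Real.exp 1) * K :=
    mul_lt_mul_of_pos_right final hK
  have eqL : 4*(4^(m+1))^2*(((M+1))*((m)! : ℝ))^2*(P1*P2*((M+1)/Real.exp 1)) * ((m)! : ℝ)^2
      = P1 * K := by
    rw [hKdef]
    field_simp
  have eqR : 4*π*P2 * (wls (m+1)*4^(m+1)*(((M+1))*((m)! : ℝ))^2)^2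
      = (π * (M+1) * wls (m+1) ^ 2 * Real.exp 1) * K := by
    rw [hKdef]
    field_simp
  linarith [step, eqL, eqR]

lemma base_case : huiskenSphereEnergy 2 < huiskenSphereEnergy 1 := by
  apply lt_of_pow_lt_pow_left₀ 2 (energy_nonneg 1)
  have h2 := energy_even_sq 1
  have h1 := energy_odd_sq 0
  norm_num at h1 h2
  rw [h1, h2]
  have he : (0:ℝ) < Real.exp 1 := Real.exp_pos 1
  have hπ := Real.pi_gt_d6
  have hee := Real.exp_one_gt_d9
  have hexp2 : Real.exp 2 = Real.exp 1 * Real.exp 1 := by rw [← Real.exp_add]; norm_num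
  rw [hexp2, ← sub_pos]
  have hdiff : 4 * π * ((Real.exp 1)⁻¹ * (1/2)) - 64 * (Real.exp 1 * Real.exp 1)⁻¹ / 4
      = (2 * π * Real.exp 1 - 16)/(Real.exp 1 * Real.exp 1) := by
    field_simp
    ring
  rw [hdiff]
  apply div_pos ?_ (by positivity)
  nlinarith

theorem stmt_15 :
    (∀ k : ℕ, 1 ≤ k → huiskenSphereEnergy (k + 1) < huiskenSphereEnergy k) ∧
      Filter.Tendsto huiskenSphereEnergy Filter.atTop (nhds (Real.sqrt 2)) := by
  have mono : ∀ k : ℕ, 1 ≤ k → huiskenSphereEnergy (k + 1) < huiskenSphereEnergy k := by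
    intro k hk
    rcases Nat.even_or_odd k with ⟨m, rfl⟩ | ⟨m, rfl⟩
    · have hm : 1 ≤ m := by omega
      rw [show m + m = 2 * m by ring]
      exact ineq_B hm
    · match m with
      | 0 => simpa using base_case
      | n + 1 =>
        have hn : 1 ≤ n + 1 := by omega
        rw [show 2 * (n + 1) + 1 + 1 = 2 * ((n + 1) + 1) by ring]
        exact ineq_A hn
  refine ⟨mono, ?_⟩
  set f : ℕ → ℝ := fun k => huiskenSphereEnergy (k + 1) with hfdef
  have hanti : Antitone f := by
    apply antitone_nat_of_succ_le
    intro n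
    exact (mono (n + 1) (by omega)).le
  have hbdd : BddBelow (Set.range f) := by
    refine ⟨0, ?_⟩
    rintro x ⟨n, rfl⟩
    exact energy_nonneg _
  have hlim : Tendsto f atTop (𝓝 (⨅ i, f i)) := tendsto_atTop_ciInf hanti hbdd
  have sub1 : Tendsto (fun m : ℕ => 2 * m + 1) atTop atTop :=
    tendsto_atTop_mono (fun n : ℕ => (by omega : n ≤ 2 * n + 1)) tendsto_id
  have hsub : Tendsto (fun m : ℕ => f (2 * m + 1)) atTop (𝓝 (⨅ i, f i)) := hlim.comp sub1
  have halt : Tendsto (fun m : ℕ => f (2 * m + 1)) atTop (𝓝 (Real.sqrt 2)) := by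
    have h := tendsto_energy_even.comp (tendsto_add_atTop_nat 1)
    apply h.congr
    intro m
    simp only [hfdef, Function.comp]
    congr 1
  have heq : (⨅ i, f i) = Real.sqrt 2 := tendsto_nhds_unique hsub halt
  rw [heq] at hlim
  exact (tendsto_add_atTop_iff_nat 1).mp hlim
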